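/- The function x ↦ x(x+1)·(ln(1 + 1/x))² is strictly increasing on (0,∞) and converges to 1 as x → ∞. -/

import Mathlib

open Real Filter Set

private lemma hasDerivAt_L {x : ℝ} (hx : 0 < x) :
    HasDerivAt (fun x : ℝ => Real.log (1 + 1 / x)) (-(x ^ 2)⁻¹ / (1 + 1 / x)) x := by
  have hne : x ≠ 0 := ne_of_gt hx
  have hpos : (0:ℝ) < 1 + 1 / x := by positivity
  have h1 : HasDerivAt (fun x : ℝ => 1 + 1 / x) (-(x ^ 2)⁻¹) x := by
    simpa [one_div] using (hasDerivAt_inv hne).const_add 1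
  exact h1.log (ne_of_gt hpos)

private lemma tendsto_log_one_add_one_div :
    Tendsto (fun x : ℝ => Real.log (1 + 1 / x)) atTop (nhds 0) := by
  have h1 : Tendsto (fun x : ℝ => 1 + 1 / x) atTop (nhds 1) := by
    have := tendsto_one_div_atTop_nhds_zero_nat (𝕜 := ℝ)
    have h0 : Tendsto (fun x : ℝ => 1 / x) atTop (nhds 0) := by
      simpa [one_div] using tendsto_inv_atTop_zero
    simpa using tendsto_const_nhds.add h0
  have := (Real.continuousAt_log (x := 1) one_ne_zero).tendsto.comp h1
  simpa [Function.comp_def] using this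

private lemma key_ineq {x : ℝ} (hx : 0 < x) : 2 < (2 * x + 1) * Real.log (1 + 1 / x) := by
  set g : ℝ → ℝ := fun x => Real.log (1 + 1 / x) - 2 / (2 * x + 1) with hg
  have hderiv : ∀ y ∈ Set.Ioi (0:ℝ),
      HasDerivAt g (-(y ^ 2)⁻¹ / (1 + 1 / y) + 4 / (2 * y + 1) ^ 2) y := by
    intro y hy
    have hy' : (0:ℝ) < y := hy
    have hne : (2 * y + 1) ≠ 0 := by positivity
    have h2 : HasDerivAt (fun y : ℝ => 2 / (2 * y + 1))
        ((0 * (2 * y + 1) - 2 * 2) / (2 * y + 1) ^ 2) y := by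
      have hden : HasDerivAt (fun y : ℝ => 2 * y + 1) 2 y := by
        simpa using ((hasDerivAt_id y).const_mul 2).add_const 1
      exact (hasDerivAt_const y 2).div hden hne
    have : HasDerivAt (fun y : ℝ => Real.log (1 + 1 / y) - 2 / (2 * y + 1)) _ y :=
      (hasDerivAt_L hy').sub h2
    convert this using 1
    field_simp
    ring
  have hderiv_neg : ∀ y ∈ Set.Ioi (0:ℝ),
      (-(y ^ 2)⁻¹ / (1 + 1 / y) + 4 / (2 * y + 1) ^ 2) < 0 := by
    intro y hy
    have hy' : (0:ℝ) < y := hy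
    have h1 : (y ^ 2)⁻¹ / (1 + 1 / y) = 1 / (y ^ 2 + y) := by
      field_simp
    have h2 : 4 / (2 * y + 1) ^ 2 < 1 / (y ^ 2 + y) := by
      rw [div_lt_div_iff₀ (by positivity) (by positivity)]
      nlinarith
    have : -(y ^ 2)⁻¹ / (1 + 1 / y) = -(1 / (y ^ 2 + y)) := by
      rw [neg_div, h1]
    rw [this]
    linarith
  have hanti : StrictAntiOn g (Set.Ioi (0:ℝ)) := by
    apply strictAntiOn_of_deriv_neg (convex_Ioi 0)
    · exact fun y hy => ((hderiv y hy).continuousAt).continuousWithinAt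
    · intro y hy
      rw [interior_Ioi] at hy
      rw [(hderiv y hy).deriv]
      exact hderiv_neg y hy
  have hlim : Tendsto g atTop (nhds 0) := by
    have h2 : Tendsto (fun y : ℝ => 2 / (2 * y + 1)) atTop (nhds 0) := by
      apply Tendsto.div_atTop (tendsto_const_nhds)
      exact tendsto_atTop_add_const_right _ 1
        (tendsto_id.const_mul_atTop (by norm_num : (0:ℝ) < 2))
    simpa [hg, one_div] using tendsto_log_one_add_one_div.sub h2
  have hx1 : x + 1 ∈ Set.Ioi (0:ℝ) := by simp; linarith
  have hge : 0 ≤ g (x + 1) := by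
    apply le_of_tendsto hlim
    filter_upwards [eventually_ge_atTop (x + 1)] with y hy
    rcases eq_or_lt_of_le hy with h | h
    · rw [h]
    · exact le_of_lt (hanti hx1 (by simp; linarith) h)
  have hgt : 0 < g x := lt_of_le_of_lt hge (hanti (Set.mem_Ioi.mpr hx) hx1 (by linarith))
  have : 2 / (2 * x + 1) < Real.log (1 + 1 / x) := by
    have := hgt
    simp only [hg] at this
    linarith
  calc 2 = (2 / (2 * x + 1)) * (2 * x + 1) := by field_simp
  _ < Real.log (1 + 1 / x) * (2 * x + 1) := by
      apply mul_lt_mul_of_pos_right this (by positivity)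
  _ = (2 * x + 1) * Real.log (1 + 1 / x) := by ring

private lemma hasDerivAt_f {x : ℝ} (hx : 0 < x) :
    HasDerivAt (fun x : ℝ => x * (x + 1) * (Real.log (1 + 1 / x)) ^ 2)
      (Real.log (1 + 1 / x) * ((2 * x + 1) * Real.log (1 + 1 / x) - 2)) x := by
  have hne : x ≠ 0 := ne_of_gt hx
  have hpos : (0:ℝ) < 1 + 1 / x := by positivity
  have hp : HasDerivAt (fun x : ℝ => x * (x + 1)) (1 * (x + 1) + x * 1) x :=
    (hasDerivAt_id x).mul ((hasDerivAt_id x).add_const 1)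
  have hq := (hasDerivAt_L hx).pow 2
  have : HasDerivAt (fun x : ℝ => x * (x + 1) * (Real.log (1 + 1 / x)) ^ 2) _ x :=
    hp.mul hq
  convert this using 1
  have hne2 : (1 + 1 / x) ≠ 0 := ne_of_gt hpos
  norm_num
  field_simp
  ring

theorem variance_building_block :
    StrictMonoOn (fun x : ℝ => x * (x + 1) * (Real.log (1 + 1 / x)) ^ 2)
      (Set.Ioi (0 : ℝ)) ∧
    Filter.Tendsto (fun x : ℝ => x * (x + 1) * (Real.log (1 + 1 / x)) ^ 2)
      Filter.atTop (nhds 1) := by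
  constructor
  · apply strictMonoOn_of_deriv_pos (convex_Ioi 0)
    · exact fun y hy => ((hasDerivAt_f hy).continuousAt).continuousWithinAt
    · intro y hy
      rw [interior_Ioi] at hy
      rw [(hasDerivAt_f hy).deriv]
      have hy0 : (0:ℝ) < y := hy
      have hL : 0 < Real.log (1 + 1 / y) :=
        Real.log_pos (by rw [lt_add_iff_pos_right]; positivity)
      have h2 := key_ineq hy
      exact mul_pos hL (by linarith)
  · have h1 : Tendsto (fun x : ℝ => x * Real.log (1 + 1 / x)) atTop (nhds 1) := by
      simpa using Real.tendsto_mul_log_one_add_div_atTop 1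
    have h2 : Tendsto (fun x : ℝ => 1 + 1 / x) atTop (nhds 1) := by
      have h0 : Tendsto (fun x : ℝ => 1 / x) atTop (nhds 0) := by
        simpa [one_div] using tendsto_inv_atTop_zero
      simpa using tendsto_const_nhds.add h0
    have h3 : Tendsto (fun x : ℝ => (1 + 1 / x) * (x * Real.log (1 + 1 / x)) ^ 2)
        atTop (nhds 1) := by
      have := h2.mul (h1.pow 2)
      simpa using this
    apply h3.congr'
    filter_upwards [eventually_gt_atTop (0:ℝ)] with x hx
    have hne : x ≠ 0 := ne_of_gt hx
    field_simp
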